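/- Let χ : ℝⁿ → ℝ be a kernel (satisfying (χ1), (χ2), (χ3) and m_0(χ) < ∞), and let f : ℝⁿ → ℝ be a bounded measurable function. If f is continuous at a point x̄ ∈ ℝⁿ, then lim_{w → ∞} (S_w f)(x̄) = f(x̄). -/

import Mathlib

open MeasureTheory Filter

noncomputable def latticePt (n : ℕ) (k : Fin n → ℤ) : EuclideanSpace ℝ (Fin n) :=
  WithLp.toLp 2 (fun i => (k i : ℝ))

/-- Discrete absolute moment of order `β`. -/
noncomputable def mom (n : ℕ) (χ : EuclideanSpace ℝ (Fin n) → ℝ) (β : ℝ) : ENNReal :=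
  ⨆ u : EuclideanSpace ℝ (Fin n), ∑' k : Fin n → ℤ,
    ENNReal.ofReal (|χ (u - latticePt n k)| * ‖u - latticePt n k‖ ^ β)

/-- The cell `R_k^w`. -/
def cell (n : ℕ) (w : ℝ) (k : Fin n → ℤ) : Set (EuclideanSpace ℝ (Fin n)) :=
  {u | ∀ i, u i ∈ Set.Icc ((k i : ℝ) / w) (((k i : ℝ) + 1) / w)}

/-- Sampling Kantorovich operator. -/
noncomputable def SK (n : ℕ) (χ f : EuclideanSpace ℝ (Fin n) → ℝ) (w : ℝ)
    (x : EuclideanSpace ℝ (Fin n)) : ℝ :=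
  ∑' k : Fin n → ℤ, χ (w • x - latticePt n k) * (w ^ n * ∫ u in cell n w k, f u)

lemma mom_bound {n : ℕ} {χ : EuclideanSpace ℝ (Fin n) → ℝ} {β : ℝ}
    (h : mom n χ β < ⊤) (u : EuclideanSpace ℝ (Fin n)) :
    Summable (fun k : Fin n → ℤ => |χ (u - latticePt n k)| * ‖u - latticePt n k‖ ^ β) ∧
    ∑' k : Fin n → ℤ, |χ (u - latticePt n k)| * ‖u - latticePt n k‖ ^ β ≤ (mom n χ β).toReal := by
  set g : (Fin n → ℤ) → ℝ := fun k => |χ (u - latticePt n k)| * ‖u - latticePt n k‖ ^ β with hg_def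
  have hg : ∀ k, 0 ≤ g k := fun k =>
    mul_nonneg (abs_nonneg _) (Real.rpow_nonneg (norm_nonneg _) _)
  have hle : ∑' k, ENNReal.ofReal (g k) ≤ mom n χ β :=
    le_iSup (fun u : EuclideanSpace ℝ (Fin n) => ∑' k : Fin n → ℤ,
      ENNReal.ofReal (|χ (u - latticePt n k)| * ‖u - latticePt n k‖ ^ β)) u
  have hne : ∑' k, ENNReal.ofReal (g k) ≠ ⊤ := (lt_of_le_of_lt hle h).ne
  have hsumm : Summable g := by
    have h1 := ENNReal.summable_toReal hne
    have h2 : (fun k => (ENNReal.ofReal (g k)).toReal) = g :=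
      funext fun k => ENNReal.toReal_ofReal (hg k)
    rwa [h2] at h1
  refine ⟨hsumm, ?_⟩
  have h3 : ENNReal.ofReal (∑' k, g k) ≤ mom n χ β := by
    rw [ENNReal.ofReal_tsum_of_nonneg hg hsumm]; exact hle
  calc ∑' k, g k = (ENNReal.ofReal (∑' k, g k)).toReal :=
        (ENNReal.toReal_ofReal (tsum_nonneg hg)).symm
    _ ≤ _ := ENNReal.toReal_mono h.ne h3

lemma mom0_bound {n : ℕ} {χ : EuclideanSpace ℝ (Fin n) → ℝ}
    (h : mom n χ 0 < ⊤) (u : EuclideanSpace ℝ (Fin n)) :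
    Summable (fun k : Fin n → ℤ => |χ (u - latticePt n k)|) ∧
    ∑' k : Fin n → ℤ, |χ (u - latticePt n k)| ≤ (mom n χ 0).toReal := by
  have := mom_bound h u
  simpa [Real.rpow_zero] using this

lemma cell_eq_preimage (n : ℕ) (w : ℝ) (k : Fin n → ℤ) :
    cell n w k = (MeasurableEquiv.toLp 2 (Fin n → ℝ)).symm ⁻¹'
      (Set.univ.pi fun i => Set.Icc ((k i : ℝ) / w) (((k i : ℝ) + 1) / w)) := by
  ext u
  simp only [cell, Set.mem_setOf_eq, Set.mem_preimage, Set.mem_pi, Set.mem_univ,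
    true_implies, Set.mem_Icc]
  rfl

lemma cell_measurable (n : ℕ) (w : ℝ) (k : Fin n → ℤ) : MeasurableSet (cell n w k) := by
  rw [cell_eq_preimage]
  exact (MeasurableEquiv.toLp 2 (Fin n → ℝ)).symm.measurable
    (MeasurableSet.univ_pi fun i => measurableSet_Icc)

lemma volume_cell {n : ℕ} {w : ℝ} (hw : 0 < w) (k : Fin n → ℤ) :
    volume (cell n w k) = ENNReal.ofReal (w⁻¹ ^ n) := by
  rw [cell_eq_preimage,
    (EuclideanSpace.volume_preserving_symm_measurableEquiv_toLp (Fin n)).measure_preimage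
      ((MeasurableSet.univ_pi fun i => measurableSet_Icc).nullMeasurableSet),
    volume_pi_pi]
  have : ∀ i : Fin n, volume (Set.Icc ((k i : ℝ) / w) (((k i : ℝ) + 1) / w))
      = ENNReal.ofReal w⁻¹ := by
    intro i
    rw [Real.volume_Icc]
    congr 1
    field_simp
    ring
  simp only [this, Finset.prod_const, Finset.card_univ, Fintype.card_fin]
  rw [← ENNReal.ofReal_pow (by positivity)]

lemma cell_dist {n : ℕ} {w : ℝ} (hw : 0 < w) {k : Fin n → ℤ}
    {u : EuclideanSpace ℝ (Fin n)} (hu : u ∈ cell n w k) :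
    ‖u - w⁻¹ • latticePt n k‖ ≤ Real.sqrt n * (1 / w) := by
  rw [EuclideanSpace.norm_eq]
  have hcoord : ∀ i, ‖(u - w⁻¹ • latticePt n k) i‖ ^ 2 ≤ (1 / w) ^ 2 := by
    intro i
    have h1 : (u - w⁻¹ • latticePt n k) i = u i - (k i : ℝ) / w := by
      simp [latticePt, PiLp.sub_apply, PiLp.smul_apply, smul_eq_mul, div_eq_inv_mul]
    have h2 := (hu i).1
    have h3 := (hu i).2
    have h4 : ((k i : ℝ) + 1) / w = (k i : ℝ) / w + 1 / w := by ring
    rw [h1, Real.norm_eq_abs, ← Real.sqrt_sq_eq_abs]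
    have h5 : (u i - (k i : ℝ) / w) ^ 2 ≤ (1 / w) ^ 2 := by
      rw [h4] at h3
      nlinarith [one_div_pos.mpr hw]
    calc Real.sqrt ((u i - (k i : ℝ) / w) ^ 2) ^ 2
        = (u i - (k i : ℝ) / w) ^ 2 := Real.sq_sqrt (sq_nonneg _)
      _ ≤ _ := h5
  calc Real.sqrt (∑ i, ‖(u - w⁻¹ • latticePt n k) i‖ ^ 2)
      ≤ Real.sqrt (∑ _i : Fin n, (1 / w) ^ 2) :=
        Real.sqrt_le_sqrt (Finset.sum_le_sum fun i _ => hcoord i)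
    _ = Real.sqrt ((n : ℝ) * (1 / w) ^ 2) := by
        rw [Finset.sum_const, Finset.card_univ, Fintype.card_fin, nsmul_eq_mul]
    _ = Real.sqrt n * (1 / w) := by
        rw [Real.sqrt_mul (Nat.cast_nonneg n), Real.sqrt_sq (by positivity)]

lemma integrableOn_cell {n : ℕ} {w : ℝ} (hw : 0 < w) (k : Fin n → ℤ)
    {g : EuclideanSpace ℝ (Fin n) → ℝ} (hg : Measurable g) {C : ℝ} (hC : ∀ x, |g x| ≤ C) :
    IntegrableOn g (cell n w k) := by
  have hvol : volume (cell n w k) < ⊤ := by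
    rw [volume_cell hw]; exact ENNReal.ofReal_lt_top
  refine Integrable.mono' (g := fun _ => C) (integrableOn_const hvol.ne)
    hg.aestronglyMeasurable (Filter.Eventually.of_forall fun x => ?_)
  simpa [Real.norm_eq_abs] using hC x

lemma cell_avg_bound {n : ℕ} {w : ℝ} (hw : 0 < w) (k : Fin n → ℤ)
    {g : EuclideanSpace ℝ (Fin n) → ℝ} {C : ℝ}
    (hC : ∀ u ∈ cell n w k, |g u| ≤ C) :
    |w ^ n * ∫ u in cell n w k, g u| ≤ C := by
  have hvol : volume (cell n w k) < ⊤ := by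
    rw [volume_cell hw]; exact ENNReal.ofReal_lt_top
  have hI : ‖∫ u in cell n w k, g u‖ ≤ C * (volume (cell n w k)).toReal :=
    norm_setIntegral_le_of_norm_le_const_ae hvol
      ((ae_restrict_iff' (cell_measurable n w k)).mpr (Filter.Eventually.of_forall
        fun u hu => by simpa [Real.norm_eq_abs] using hC u hu))
  have htr : (volume (cell n w k)).toReal = w⁻¹ ^ n := by
    rw [volume_cell hw, ENNReal.toReal_ofReal (by positivity)]
  rw [abs_mul, abs_of_nonneg (by positivity : (0:ℝ) ≤ w ^ n)]
  calc w ^ n * |∫ u in cell n w k, g u| ≤ w ^ n * (C * w⁻¹ ^ n) := by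
        rw [← htr]
        exact mul_le_mul_of_nonneg_left (by simpa [Real.norm_eq_abs] using hI)
          (by positivity)
    _ = C * (w * w⁻¹) ^ n := by rw [mul_pow]; ring
    _ = C := by rw [mul_inv_cancel₀ hw.ne', one_pow, mul_one]

theorem stmt0 (n : ℕ) (χ f : EuclideanSpace ℝ (Fin n) → ℝ)
    (hχmeas : Measurable χ)
    (hχ1 : Integrable χ)
    (hχbd : ∃ δ > (0:ℝ), ∃ M : ℝ, ∀ x : EuclideanSpace ℝ (Fin n), ‖x‖ ≤ δ → |χ x| ≤ M)
    (hχ2 : ∀ y : EuclideanSpace ℝ (Fin n), ∑' k : Fin n → ℤ, χ (y - latticePt n k) = 1)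
    (hχ3 : ∃ β > (0:ℝ), mom n χ β < ⊤)
    (hχ0 : mom n χ 0 < ⊤)
    (hfmeas : Measurable f) (hfbd : ∃ B : ℝ, ∀ x, |f x| ≤ B)
    (x₀ : EuclideanSpace ℝ (Fin n)) (hcont : ContinuousAt f x₀) :
    Tendsto (fun w : ℝ => SK n χ f w x₀) atTop (nhds (f x₀)) := by
  obtain ⟨B, hB⟩ := hfbd
  have hB0 : 0 ≤ B := le_trans (abs_nonneg _) (hB x₀)
  obtain ⟨β, hβ, hmβ⟩ := hχ3
  set C₀ := (mom n χ 0).toReal with hC₀def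
  set Mβ := (mom n χ β).toReal with hMβdef
  have hC₀0 : 0 ≤ C₀ := ENNReal.toReal_nonneg
  have hMβ0 : 0 ≤ Mβ := ENNReal.toReal_nonneg
  rw [Metric.tendsto_nhds]
  intro ε hε
  set ε' := ε / (2 * (C₀ + 1)) with hε'def
  have hε' : 0 < ε' := by positivity
  obtain ⟨δ, hδ, hδc⟩ := Metric.continuousAt_iff.mp hcont ε' hε'
  have E1 : ∀ᶠ w : ℝ in atTop, (1:ℝ) ≤ w := eventually_ge_atTop 1
  have T2 : Tendsto (fun w : ℝ => Real.sqrt n * (1 / w)) atTop (nhds 0) := by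
    have := tendsto_inv_atTop_zero (𝕜 := ℝ)
    simpa [one_div] using this.const_mul (Real.sqrt n)
  have E2 : ∀ᶠ w : ℝ in atTop, Real.sqrt n * (1 / w) < δ / 2 :=
    T2.eventually (gt_mem_nhds (by positivity))
  have T3 : Tendsto (fun w : ℝ => 2 * B * Mβ * (2 / (w * δ)) ^ β) atTop (nhds 0) := by
    have funeq : (fun w : ℝ => 2 * B * Mβ * (2 / (w * δ)) ^ β)
        = fun w : ℝ => 2 * B * Mβ * ((2 / δ) * w⁻¹) ^ β := by
      funext w
      rw [div_mul_eq_div_div_swap, div_eq_mul_inv (2 / δ)]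
    rw [funeq]
    have h1 : Tendsto (fun w : ℝ => (2 / δ) * w⁻¹) atTop (nhds 0) := by
      simpa using (tendsto_inv_atTop_zero (𝕜 := ℝ)).const_mul (2 / δ)
    have h2 : ContinuousAt (fun x : ℝ => x ^ β) 0 :=
      Real.continuousAt_rpow_const 0 β (Or.inr hβ.le)
    have h3 := (h2.tendsto.comp h1)
    rw [Real.zero_rpow hβ.ne'] at h3
    simpa using h3.const_mul (2 * B * Mβ)
  have E3 : ∀ᶠ w : ℝ in atTop, 2 * B * Mβ * (2 / (w * δ)) ^ β < ε / 2 :=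
    T3.eventually (gt_mem_nhds (by positivity))
  filter_upwards [E1, E2, E3] with w hw1 hw2 hw3
  have hw0 : (0:ℝ) < w := lt_of_lt_of_le one_pos hw1
  obtain ⟨h0sum, h0le⟩ := mom0_bound hχ0 (w • x₀)
  obtain ⟨hβsum, hβle⟩ := mom_bound hmβ (w • x₀)
  set a : (Fin n → ℤ) → ℝ := fun k => w ^ n * ∫ u in cell n w k, (f u - f x₀) with ha_def
  set C2 := 2 * B * (2 / (w * δ)) ^ β with hC2def
  have hC2_0 : 0 ≤ C2 := by positivity
  have hvol : ∀ k : Fin n → ℤ, volume (cell n w k) < ⊤ := fun k => by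
    rw [volume_cell hw0]; exact ENNReal.ofReal_lt_top
  have hfint : ∀ k : Fin n → ℤ, IntegrableOn f (cell n w k) := fun k =>
    integrableOn_cell hw0 k hfmeas hB
  have hcint : ∀ k : Fin n → ℤ, IntegrableOn (fun _ => f x₀) (cell n w k) := fun k =>
    integrableOn_const (hvol k).ne
  have ha_eq : ∀ k : Fin n → ℤ, χ (w • x₀ - latticePt n k) * a k
      = χ (w • x₀ - latticePt n k) * (w ^ n * ∫ u in cell n w k, f u)
        - χ (w • x₀ - latticePt n k) * f x₀ := by
    intro k
    have hint : ∫ u in cell n w k, (f u - f x₀)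
        = (∫ u in cell n w k, f u) - f x₀ * w⁻¹ ^ n := by
      rw [integral_sub (hfint k) (hcint k), setIntegral_const, measureReal_def, volume_cell hw0,
        ENNReal.toReal_ofReal (by positivity), smul_eq_mul, mul_comm]
    have hpow : w ^ n * w⁻¹ ^ n = 1 := by
      rw [← mul_pow, mul_inv_cancel₀ hw0.ne', one_pow]
    have : a k = w ^ n * (∫ u in cell n w k, f u) - f x₀ := by
      rw [ha_def]
      simp only
      rw [hint, mul_sub]
      congr 1
      rw [show w ^ n * (f x₀ * w⁻¹ ^ n) = f x₀ * (w ^ n * w⁻¹ ^ n) by ring, hpow, mul_one]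
    rw [this]; ring
  have S1 : Summable (fun k : Fin n → ℤ =>
      χ (w • x₀ - latticePt n k) * (w ^ n * ∫ u in cell n w k, f u)) := by
    refine Summable.of_norm_bounded (g := fun k => |χ (w • x₀ - latticePt n k)| * B)
      (h0sum.mul_right B) fun k => ?_
    rw [Real.norm_eq_abs, abs_mul]
    exact mul_le_mul_of_nonneg_left (cell_avg_bound hw0 k fun u _ => hB u) (abs_nonneg _)
  have S2 : Summable (fun k : Fin n → ℤ => χ (w • x₀ - latticePt n k) * f x₀) :=
    h0sum.of_abs.mul_right (f x₀)
  have key1 : SK n χ f w x₀ - f x₀ = ∑' k, χ (w • x₀ - latticePt n k) * a k := by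
    have h2 : ∑' k : Fin n → ℤ, χ (w • x₀ - latticePt n k) * f x₀ = f x₀ := by
      rw [tsum_mul_right, hχ2 (w • x₀), one_mul]
    have hSK : SK n χ f w x₀ = ∑' k : Fin n → ℤ,
        χ (w • x₀ - latticePt n k) * (w ^ n * ∫ u in cell n w k, f u) := rfl
    rw [hSK, ← h2, ← S1.tsum_sub S2]
    exact tsum_congr fun k => (ha_eq k).symm
  have key2 : ∀ k : Fin n → ℤ, |a k| ≤ ε' + C2 * ‖w • x₀ - latticePt n k‖ ^ β := by
    intro k
    rcases le_or_gt ‖w • x₀ - latticePt n k‖ (w * δ / 2) with hk | hk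
    · have hnear : ∀ u ∈ cell n w k, |f u - f x₀| ≤ ε' := by
        intro u hu
        have h1 : ‖u - w⁻¹ • latticePt n k‖ ≤ Real.sqrt n * (1 / w) := cell_dist hw0 hu
        have h2 : ‖w⁻¹ • latticePt n k - x₀‖ ≤ δ / 2 := by
          have heq : w⁻¹ • latticePt n k - x₀ = w⁻¹ • (latticePt n k - w • x₀) := by
            rw [smul_sub, smul_smul, inv_mul_cancel₀ hw0.ne', one_smul]
          rw [heq, norm_smul, norm_sub_rev, Real.norm_eq_abs, abs_of_pos (inv_pos.mpr hw0)]
          calc w⁻¹ * ‖w • x₀ - latticePt n k‖ ≤ w⁻¹ * (w * δ / 2) :=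
                mul_le_mul_of_nonneg_left hk (inv_pos.mpr hw0).le
            _ = δ / 2 := by field_simp
        have hd : dist u x₀ < δ := by
          calc dist u x₀ ≤ dist u (w⁻¹ • latticePt n k) + dist (w⁻¹ • latticePt n k) x₀ :=
                dist_triangle _ _ _
            _ = ‖u - w⁻¹ • latticePt n k‖ + ‖w⁻¹ • latticePt n k - x₀‖ := by
                rw [dist_eq_norm, dist_eq_norm]
            _ < δ / 2 + δ / 2 := add_lt_add_of_lt_of_le (lt_of_le_of_lt h1 hw2) h2
            _ = δ := by ring
        have := hδc hd
        rw [Real.dist_eq] at this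
        exact this.le
      have h := cell_avg_bound hw0 k hnear
      have h2 : (0:ℝ) ≤ C2 * ‖w • x₀ - latticePt n k‖ ^ β :=
        mul_nonneg hC2_0 (Real.rpow_nonneg (norm_nonneg _) _)
      linarith
    · have hfar : ∀ u ∈ cell n w k, |f u - f x₀| ≤ 2 * B := by
        intro u _
        calc |f u - f x₀| ≤ |f u| + |f x₀| := abs_sub _ _
          _ ≤ B + B := add_le_add (hB u) (hB x₀)
          _ = 2 * B := by ring
      have h := cell_avg_bound hw0 k hfar
      have h2 : 2 * B ≤ C2 * ‖w • x₀ - latticePt n k‖ ^ β := by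
        have hx1 : (1:ℝ) ≤ (2 / (w * δ)) * ‖w • x₀ - latticePt n k‖ := by
          rw [div_mul_eq_mul_div, le_div_iff₀ (by positivity)]
          linarith
        calc 2 * B = 2 * B * 1 := by ring
          _ ≤ 2 * B * ((2 / (w * δ)) * ‖w • x₀ - latticePt n k‖) ^ β :=
            mul_le_mul_of_nonneg_left (Real.one_le_rpow hx1 hβ.le) (by positivity)
          _ = C2 * ‖w • x₀ - latticePt n k‖ ^ β := by
            rw [Real.mul_rpow (by positivity) (norm_nonneg _), hC2def]; ring
      linarith
  have hptw : ∀ k : Fin n → ℤ, ‖χ (w • x₀ - latticePt n k) * a k‖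
      ≤ |χ (w • x₀ - latticePt n k)| * ε'
        + C2 * (|χ (w • x₀ - latticePt n k)| * ‖w • x₀ - latticePt n k‖ ^ β) := by
    intro k
    rw [Real.norm_eq_abs, abs_mul]
    calc |χ (w • x₀ - latticePt n k)| * |a k|
        ≤ |χ (w • x₀ - latticePt n k)| * (ε' + C2 * ‖w • x₀ - latticePt n k‖ ^ β) :=
          mul_le_mul_of_nonneg_left (key2 k) (abs_nonneg _)
      _ = _ := by ring
  have Sb : Summable (fun k : Fin n → ℤ => |χ (w • x₀ - latticePt n k)| * ε'
      + C2 * (|χ (w • x₀ - latticePt n k)| * ‖w • x₀ - latticePt n k‖ ^ β)) :=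
    (h0sum.mul_right ε').add (hβsum.mul_left C2)
  have hSn : Summable (fun k : Fin n → ℤ => ‖χ (w • x₀ - latticePt n k) * a k‖) :=
    Summable.of_nonneg_of_le (fun k => norm_nonneg _) hptw Sb
  have bound : |∑' k, χ (w • x₀ - latticePt n k) * a k|
      ≤ (∑' k, |χ (w • x₀ - latticePt n k)|) * ε'
        + C2 * ∑' k, |χ (w • x₀ - latticePt n k)| * ‖w • x₀ - latticePt n k‖ ^ β := by
    calc |∑' k, χ (w • x₀ - latticePt n k) * a k|
        ≤ ∑' k, ‖χ (w • x₀ - latticePt n k) * a k‖ := by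
          rw [← Real.norm_eq_abs]; exact norm_tsum_le_tsum_norm hSn
      _ ≤ ∑' k, (|χ (w • x₀ - latticePt n k)| * ε'
          + C2 * (|χ (w • x₀ - latticePt n k)| * ‖w • x₀ - latticePt n k‖ ^ β)) :=
          Summable.tsum_le_tsum hptw hSn Sb
      _ = _ := by
          rw [Summable.tsum_add (h0sum.mul_right ε') (hβsum.mul_left C2), tsum_mul_right, tsum_mul_left]
  have h1 : (∑' k, |χ (w • x₀ - latticePt n k)|) * ε' ≤ C₀ * ε' :=
    mul_le_mul_of_nonneg_right h0le hε'.le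
  have h2 : C2 * (∑' k, |χ (w • x₀ - latticePt n k)| * ‖w • x₀ - latticePt n k‖ ^ β)
      ≤ C2 * Mβ := mul_le_mul_of_nonneg_left hβle hC2_0
  have h3 : C₀ * ε' ≤ ε / 2 := by
    have heq : (C₀ + 1) * ε' = ε / 2 := by
      rw [hε'def]
      field_simp
    have hle : C₀ * ε' ≤ (C₀ + 1) * ε' :=
      mul_le_mul_of_nonneg_right (by linarith) hε'.le
    linarith
  have h4 : C2 * Mβ < ε / 2 := by
    rw [hC2def]
    calc 2 * B * (2 / (w * δ)) ^ β * Mβ = 2 * B * Mβ * (2 / (w * δ)) ^ β := by ring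
      _ < ε / 2 := hw3
  rw [Real.dist_eq, key1]
  calc |∑' k, χ (w • x₀ - latticePt n k) * a k|
      ≤ (∑' k, |χ (w • x₀ - latticePt n k)|) * ε'
        + C2 * ∑' k, |χ (w • x₀ - latticePt n k)| * ‖w • x₀ - latticePt n k‖ ^ β := bound
    _ ≤ C₀ * ε' + C2 * Mβ := add_le_add h1 h2
    _ < ε / 2 + ε / 2 := add_lt_add_of_le_of_lt h3 h4
    _ = ε := by ring
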